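/- Let d′, d″ ≥ 1 be integers with d := d′ + d″, let σ′ ∈ S_{2d′} and σ″ ∈ S_{2d″}, and define σ ∈ S_{2d} by σ(r) := σ′(r) for 1 ≤ r ≤ 2d′ and σ(r) := σ″(r − 2d′) + 2d′ for 2d′ + 1 ≤ r ≤ 2d. Then t_σ = t_{σ′} · t_{σ″}, where the product is taken in the commutative ring R ⊗_ℂ S. (This is the purely even case n = 0 of the paper's multiplicativity lemma for the invariant tensors t_σ.) -/

import Mathlib

noncomputable section

open scoped TensorProduct

/-- The polynomial ring ℂ[y_{i,j} : 1 ≤ i ≤ j ≤ m] with the convention y_{i,j} = y_{j,i},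
realized as the polynomial ring on variables indexed by unordered pairs from Fin m. -/
abbrev PolyS (m : ℕ) := MvPolynomial (Sym2 (Fin m)) ℂ

/-- For k ∈ {0,…,d−1}, the index 2k ∈ {0,…,2d−1} (0-based version of the 1-based odd index 2k+1). -/
def idx0 (d : ℕ) (k : Fin d) : Fin (2 * d) := ⟨2 * (k : ℕ), by have := k.isLt; omega⟩

/-- For k ∈ {0,…,d−1}, the index 2k+1 ∈ {0,…,2d−1} (0-based version of the 1-based even index 2k+2). -/
def idx1 (d : ℕ) (k : Fin d) : Fin (2 * d) := ⟨2 * (k : ℕ) + 1, by have := k.isLt; omega⟩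

/-- The invariant tensor
`t_σ = 2^{-d} Σ_{i : {1,…,2d} → {1,…,m}} (y_{i_1,i_2} ⋯ y_{i_{2d−1},i_{2d}}) ⊗
(x_{i_{σ(1)},i_{σ(2)}} ⋯ x_{i_{σ(2d−1)},i_{σ(2d)}})` in R ⊗ S (indices written 0-based). -/
def tTen (m d : ℕ) (σ : Equiv.Perm (Fin (2 * d))) : PolyS m ⊗[ℂ] PolyS m :=
  ((1 : ℂ) / 2 ^ d) •
    ∑ i : Fin (2 * d) → Fin m,
      (∏ k : Fin d, MvPolynomial.X (Sym2.mk (i (idx0 d k)) (i (idx1 d k)))) ⊗ₜ[ℂ]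
        (∏ k : Fin d, MvPolynomial.X (Sym2.mk (i (σ (idx0 d k))) (i (σ (idx1 d k)))))

/-!
STATEMENT 5: If σ ∈ S_{2d} (d = d′ + d″) is obtained by juxtaposing σ′ ∈ S_{2d′} and
σ″ ∈ S_{2d″}, then t_σ = t_{σ′} · t_{σ″} in R ⊗ S.
-/

/-- Combine a pair of index functions into one on `Fin (2 * (d' + d''))`. -/
def combineFun (m d' d'' : ℕ) :
    ((Fin (2 * d') → Fin m) × (Fin (2 * d'') → Fin m)) ≃ (Fin (2 * (d' + d'')) → Fin m) where
  toFun p j := if h : (j : ℕ) < 2 * d' then p.1 ⟨j, h⟩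
    else p.2 ⟨(j : ℕ) - 2 * d', by have := j.isLt; omega⟩
  invFun i := (fun k => i ⟨k, by have := k.isLt; omega⟩,
               fun k => i ⟨2 * d' + (k : ℕ), by have := k.isLt; omega⟩)
  left_inv p := by
    refine Prod.ext ?_ ?_ <;> funext k
    · simp only []
      rw [dif_pos (show ((k : ℕ)) < 2 * d' from k.isLt)]
    · simp only []
      rw [dif_neg (show ¬ (2 * d' + (k : ℕ)) < 2 * d' by omega)]
      exact congrArg p.2 (Fin.ext (show 2 * d' + (k : ℕ) - 2 * d' = (k : ℕ) by omega))
  right_inv i := by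
    funext j
    by_cases h : (j : ℕ) < 2 * d'
    · simp only [dif_pos h]
    · simp only [dif_neg h]
      congr 1
      apply Fin.ext
      have := j.isLt
      simp
      omega

lemma combine_eval_left (m d' d'' : ℕ) (i' : Fin (2 * d') → Fin m)
    (i'' : Fin (2 * d'') → Fin m) (j : Fin (2 * (d' + d''))) (j' : Fin (2 * d'))
    (h : (j : ℕ) = (j' : ℕ)) :
    combineFun m d' d'' (i', i'') j = i' j' := by
  have hlt : (j : ℕ) < 2 * d' := h ▸ j'.isLt
  simp only [combineFun, Equiv.coe_fn_mk]
  rw [dif_pos hlt]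
  exact congrArg i' (Fin.ext h)

lemma combine_eval_right (m d' d'' : ℕ) (i' : Fin (2 * d') → Fin m)
    (i'' : Fin (2 * d'') → Fin m) (j : Fin (2 * (d' + d''))) (j' : Fin (2 * d''))
    (h : (j : ℕ) = (j' : ℕ) + 2 * d') :
    combineFun m d' d'' (i', i'') j = i'' j' := by
  have hge : ¬ (j : ℕ) < 2 * d' := by omega
  simp only [combineFun, Equiv.coe_fn_mk]
  rw [dif_neg hge]
  exact congrArg i'' (Fin.ext (show (j : ℕ) - 2 * d' = (j' : ℕ) by omega))

theorem statement5 (m d' d'' : ℕ) (hd' : 1 ≤ d') (hd'' : 1 ≤ d'')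
    (σ' : Equiv.Perm (Fin (2 * d'))) (σ'' : Equiv.Perm (Fin (2 * d'')))
    (σ : Equiv.Perm (Fin (2 * (d' + d''))))
    (hσ1 : ∀ (r : ℕ) (h : r < 2 * d'),
      ((σ ⟨r, by omega⟩ : Fin (2 * (d' + d''))) : ℕ) = ((σ' ⟨r, h⟩ : Fin (2 * d')) : ℕ))
    (hσ2 : ∀ (r : ℕ) (h : r < 2 * d''),
      ((σ ⟨2 * d' + r, by omega⟩ : Fin (2 * (d' + d''))) : ℕ) =
        ((σ'' ⟨r, h⟩ : Fin (2 * d'')) : ℕ) + 2 * d') :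
    tTen m (d' + d'') σ = tTen m d' σ' * tTen m d'' σ'' := by
  classical
  have hsc : ((1 : ℂ) / 2 ^ (d' + d'')) = (1 / 2 ^ d') * (1 / 2 ^ d'') := by
    rw [pow_add, div_mul_div_comm, one_mul]
  unfold tTen
  rw [smul_mul_smul_comm, ← hsc, Finset.sum_mul_sum,
    ← Equiv.sum_comp (combineFun m d' d''), Fintype.sum_prod_type]
  congr 1
  apply Finset.sum_congr rfl
  intro i' _
  apply Finset.sum_congr rfl
  intro i'' _
  rw [Algebra.TensorProduct.tmul_mul_tmul]
  have hy_left : ∀ k : Fin d',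
      combineFun m d' d'' (i', i'') (idx0 (d' + d'') (Fin.castAdd d'' k)) = i' (idx0 d' k) :=
    fun k => combine_eval_left m d' d'' i' i'' _ _ (by simp [idx0])
  have hy_left1 : ∀ k : Fin d',
      combineFun m d' d'' (i', i'') (idx1 (d' + d'') (Fin.castAdd d'' k)) = i' (idx1 d' k) :=
    fun k => combine_eval_left m d' d'' i' i'' _ _ (by simp [idx1])
  have hy_right : ∀ k : Fin d'',
      combineFun m d' d'' (i', i'') (idx0 (d' + d'') (Fin.natAdd d' k)) = i'' (idx0 d'' k) :=
    fun k => combine_eval_right m d' d'' i' i'' _ _ (by simp [idx0]; omega)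
  have hy_right1 : ∀ k : Fin d'',
      combineFun m d' d'' (i', i'') (idx1 (d' + d'') (Fin.natAdd d' k)) = i'' (idx1 d'' k) :=
    fun k => combine_eval_right m d' d'' i' i'' _ _ (by simp [idx1]; omega)
  have hσ0L : ∀ k : Fin d',
      ((σ (idx0 (d' + d'') (Fin.castAdd d'' k)) : Fin (2 * (d' + d''))) : ℕ)
        = ((σ' (idx0 d' k) : Fin (2 * d')) : ℕ) := by
    intro k
    have hk : 2 * (k : ℕ) < 2 * d' := by have := k.isLt; omega
    have h1 : idx0 (d' + d'') (Fin.castAdd d'' k) = ⟨2 * (k : ℕ), by omega⟩ := by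
      apply Fin.ext; simp [idx0]
    have h2 : idx0 d' k = ⟨2 * (k : ℕ), hk⟩ := rfl
    rw [h1, h2]
    exact hσ1 (2 * k) hk
  have hσ1L : ∀ k : Fin d',
      ((σ (idx1 (d' + d'') (Fin.castAdd d'' k)) : Fin (2 * (d' + d''))) : ℕ)
        = ((σ' (idx1 d' k) : Fin (2 * d')) : ℕ) := by
    intro k
    have hk : 2 * (k : ℕ) + 1 < 2 * d' := by have := k.isLt; omega
    have h1 : idx1 (d' + d'') (Fin.castAdd d'' k) = ⟨2 * (k : ℕ) + 1, by omega⟩ := by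
      apply Fin.ext; simp [idx1]
    have h2 : idx1 d' k = ⟨2 * (k : ℕ) + 1, hk⟩ := rfl
    rw [h1, h2]
    exact hσ1 (2 * k + 1) hk
  have hσ0R : ∀ k : Fin d'',
      ((σ (idx0 (d' + d'') (Fin.natAdd d' k)) : Fin (2 * (d' + d''))) : ℕ)
        = ((σ'' (idx0 d'' k) : Fin (2 * d'')) : ℕ) + 2 * d' := by
    intro k
    have hk : 2 * (k : ℕ) < 2 * d'' := by have := k.isLt; omega
    have h1 : idx0 (d' + d'') (Fin.natAdd d' k) = ⟨2 * d' + 2 * (k : ℕ), by omega⟩ := by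
      apply Fin.ext; simp [idx0]; omega
    have h2 : idx0 d'' k = ⟨2 * (k : ℕ), hk⟩ := rfl
    rw [h1, h2]
    exact hσ2 (2 * k) hk
  have hσ1R : ∀ k : Fin d'',
      ((σ (idx1 (d' + d'') (Fin.natAdd d' k)) : Fin (2 * (d' + d''))) : ℕ)
        = ((σ'' (idx1 d'' k) : Fin (2 * d'')) : ℕ) + 2 * d' := by
    intro k
    have hk : 2 * (k : ℕ) + 1 < 2 * d'' := by have := k.isLt; omega
    have h1 : idx1 (d' + d'') (Fin.natAdd d' k) = ⟨2 * d' + (2 * (k : ℕ) + 1), by omega⟩ := by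
      apply Fin.ext; simp [idx1]; omega
    have h2 : idx1 d'' k = ⟨2 * (k : ℕ) + 1, hk⟩ := rfl
    rw [h1, h2]
    exact hσ2 (2 * k + 1) hk
  congr 1
  · rw [Fin.prod_univ_add]
    congr 1
    · exact Finset.prod_congr rfl fun k _ => by rw [hy_left k, hy_left1 k]
    · exact Finset.prod_congr rfl fun k _ => by rw [hy_right k, hy_right1 k]
  · rw [Fin.prod_univ_add]
    congr 1
    · refine Finset.prod_congr rfl fun k _ => ?_
      rw [combine_eval_left m d' d'' i' i'' _ (σ' (idx0 d' k)) (hσ0L k),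
        combine_eval_left m d' d'' i' i'' _ (σ' (idx1 d' k)) (hσ1L k)]
    · refine Finset.prod_congr rfl fun k _ => ?_
      rw [combine_eval_right m d' d'' i' i'' _ (σ'' (idx0 d'' k)) (hσ0R k),
        combine_eval_right m d' d'' i' i'' _ (σ'' (idx1 d'' k)) (hσ1R k)]
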